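/- Let 𝓠 be a 𝓖-convex set of probability measures ν ≪ ℙ with ν|_𝓖 = ℙ|_𝓖. Then for all X ∈ L^∞, sup_{μ ∈ 𝓠} 𝔼^μ[X] = 𝔼[esssup_{μ ∈ 𝓠} 𝔼^μ[X|𝓖]]. -/

import Mathlib

open MeasureTheory Filter

section Aux

variable {Ω : Type*} {m mΩ : MeasurableSpace Ω} {ℙ : Measure Ω}

private lemma aux_int {D X : Ω → ℝ} {C : ℝ} (hDm : Measurable D)
    (hD0 : ∀ᵐ ω ∂ℙ, 0 ≤ D ω) (hDi : Integrable D ℙ) (hX : Measurable X)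
    (hC : ∀ ω, |X ω| ≤ C) : Integrable (fun ω => D ω * X ω) ℙ := by
  refine (hDi.const_mul C).mono' (hDm.mul hX).aestronglyMeasurable ?_
  filter_upwards [hD0] with ω h0
  rw [Real.norm_eq_abs, abs_mul, abs_of_nonneg h0, mul_comm C (D ω)]
  exact mul_le_mul_of_nonneg_left (hC ω) h0

private lemma aux_bdd (hm : m ≤ mΩ) [IsProbabilityMeasure ℙ] {D X : Ω → ℝ} {C : ℝ}
    (hDm : Measurable D) (hD0 : ∀ᵐ ω ∂ℙ, 0 ≤ D ω) (hDi : Integrable D ℙ)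
    (hD1 : (ℙ[D|m]) =ᵐ[ℙ] fun _ => 1) (hX : Measurable X) (hC : ∀ ω, |X ω| ≤ C) :
    (∀ᵐ ω ∂ℙ, (ℙ[fun ω => D ω * X ω|m]) ω ≤ C) ∧
    (∀ᵐ ω ∂ℙ, -C ≤ (ℙ[fun ω => D ω * X ω|m]) ω) := by
  have hDX : Integrable (fun ω => D ω * X ω) ℙ := aux_int hDm hD0 hDi hX hC
  constructor
  · have h1 : (ℙ[fun ω => D ω * X ω|m]) ≤ᵐ[ℙ] ℙ[fun ω => C * D ω|m] := by
      refine condExp_mono hDX (hDi.const_mul C) ?_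
      filter_upwards [hD0] with ω h0
      calc D ω * X ω ≤ D ω * C := by
              refine mul_le_mul_of_nonneg_left ((abs_le.mp (hC ω)).2) h0
        _ = C * D ω := mul_comm _ _
    have h2 : (ℙ[fun ω => C * D ω|m]) =ᵐ[ℙ] fun ω => C * (ℙ[D|m]) ω :=
      condExp_smul (μ := ℙ) (m := m) C D
    filter_upwards [h1, h2, hD1] with ω e1 e2 e3
    rw [e2] at e1
    simpa [e3] using e1
  · have h1 : (ℙ[fun ω => (-C) * D ω|m]) ≤ᵐ[ℙ] ℙ[fun ω => D ω * X ω|m] := by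
      refine condExp_mono (hDi.const_mul (-C)) hDX ?_
      filter_upwards [hD0] with ω h0
      calc (-C) * D ω = D ω * (-C) := mul_comm _ _
        _ ≤ D ω * X ω := mul_le_mul_of_nonneg_left ((abs_le.mp (hC ω)).1) h0
    have h2 : (ℙ[fun ω => (-C) * D ω|m]) =ᵐ[ℙ] fun ω => (-C) * (ℙ[D|m]) ω :=
      condExp_smul (μ := ℙ) (m := m) (-C) D
    filter_upwards [h1, h2, hD1] with ω e1 e2 e3
    rw [e2] at e1
    simp only [e3] at e1
    simpa using e1

private lemma aux_comb (hm : m ≤ mΩ) [IsProbabilityMeasure ℙ] {X : Ω → ℝ} {C : ℝ}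
    (hX : Measurable X) (hC : ∀ ω, |X ω| ≤ C) {D₁ D₂ : Ω → ℝ}
    (h1 : Measurable D₁) (h10 : ∀ᵐ ω ∂ℙ, 0 ≤ D₁ ω) (h1i : Integrable D₁ ℙ)
    (h2 : Measurable D₂) (h20 : ∀ᵐ ω ∂ℙ, 0 ≤ D₂ ω) (h2i : Integrable D₂ ℙ) :
    ∃ lam : Ω → ℝ, StronglyMeasurable[m] lam ∧ (∀ ω, 0 ≤ lam ω ∧ lam ω ≤ 1) ∧
      (ℙ[fun ω => (lam ω * D₁ ω + (1 - lam ω) * D₂ ω) * X ω|m]) =ᵐ[ℙ]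
        fun ω => max ((ℙ[fun ω => D₁ ω * X ω|m]) ω) ((ℙ[fun ω => D₂ ω * X ω|m]) ω) := by
  set f₁ := ℙ[fun ω => D₁ ω * X ω|m] with hf₁def
  set f₂ := ℙ[fun ω => D₂ ω * X ω|m] with hf₂def
  have hf₁ : StronglyMeasurable[m] f₁ := stronglyMeasurable_condExp
  have hf₂ : StronglyMeasurable[m] f₂ := stronglyMeasurable_condExp
  have hS : MeasurableSet[m] {ω | f₂ ω ≤ f₁ ω} := hf₂.measurableSet_le hf₁
  set lam : Ω → ℝ := ({ω | f₂ ω ≤ f₁ ω}).indicator (fun _ => (1 : ℝ)) with hlamdef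
  have hlam : StronglyMeasurable[m] lam := stronglyMeasurable_const.indicator hS
  have hlam01 : ∀ ω, 0 ≤ lam ω ∧ lam ω ≤ 1 := by
    intro ω
    by_cases h : ω ∈ {ω | f₂ ω ≤ f₁ ω} <;> simp [hlamdef, Set.indicator_apply, h]
  refine ⟨lam, hlam, hlam01, ?_⟩
  have h1X : Integrable (fun ω => D₁ ω * X ω) ℙ := aux_int h1 h10 h1i hX hC
  have h2X : Integrable (fun ω => D₂ ω * X ω) ℙ := aux_int h2 h20 h2i hX hC
  have hmul : ∀ (lm : Ω → ℝ), StronglyMeasurable[m] lm → (∀ ω, |lm ω| ≤ 1) →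
      ∀ (D : Ω → ℝ), Measurable D → Integrable (fun ω => D ω * X ω) ℙ →
      Integrable (fun ω => lm ω * (D ω * X ω)) ℙ := by
    intro lm hlm hlm1 D hD hDX
    refine hDX.abs.mono' (((hlm.mono hm).measurable.mul (hD.mul hX)).aestronglyMeasurable) ?_
    refine Eventually.of_forall fun ω => ?_
    rw [Real.norm_eq_abs, abs_mul]
    calc |lm ω| * |D ω * X ω| ≤ 1 * |D ω * X ω| :=
          mul_le_mul_of_nonneg_right (hlm1 ω) (abs_nonneg _)
      _ = |D ω * X ω| := one_mul _
  have hlamabs : ∀ ω, |lam ω| ≤ 1 := fun ω =>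
    abs_le.mpr ⟨le_trans (by norm_num) (hlam01 ω).1, (hlam01 ω).2⟩
  have hlamabs' : ∀ ω, |1 - lam ω| ≤ 1 := fun ω =>
    abs_le.mpr ⟨by linarith [(hlam01 ω).2], by linarith [(hlam01 ω).1]⟩
  have hl1 : Integrable (fun ω => lam ω * (D₁ ω * X ω)) ℙ := hmul lam hlam hlamabs D₁ h1 h1X
  have hl2 : Integrable (fun ω => (1 - lam ω) * (D₂ ω * X ω)) ℙ :=
    hmul (fun ω => 1 - lam ω) (stronglyMeasurable_const.sub hlam) hlamabs' D₂ h2 h2X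
  have hadd : (fun ω => (lam ω * D₁ ω + (1 - lam ω) * D₂ ω) * X ω)
      = (fun ω => lam ω * (D₁ ω * X ω)) + fun ω => (1 - lam ω) * (D₂ ω * X ω) := by
    funext ω; simp only [Pi.add_apply]; ring
  have hce : (ℙ[fun ω => (lam ω * D₁ ω + (1 - lam ω) * D₂ ω) * X ω|m]) =ᵐ[ℙ]
      (ℙ[fun ω => lam ω * (D₁ ω * X ω)|m]) + ℙ[fun ω => (1 - lam ω) * (D₂ ω * X ω)|m] := by
    rw [hadd]; exact condExp_add hl1 hl2 m
  have hp1 : (ℙ[fun ω => lam ω * (D₁ ω * X ω)|m]) =ᵐ[ℙ] fun ω => lam ω * f₁ ω :=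
    condExp_mul_of_stronglyMeasurable_left hlam hl1 h1X
  have hp2 : (ℙ[fun ω => (1 - lam ω) * (D₂ ω * X ω)|m]) =ᵐ[ℙ] fun ω => (1 - lam ω) * f₂ ω :=
    condExp_mul_of_stronglyMeasurable_left (stronglyMeasurable_const.sub hlam) hl2 h2X
  filter_upwards [hce, hp1, hp2] with ω e1 e2 e3
  rw [e1, Pi.add_apply, e2, e3]
  by_cases h : f₂ ω ≤ f₁ ω
  · have hl : lam ω = 1 := by simp [hlamdef, Set.indicator_apply, h]
    rw [hl, max_eq_left h]; ring
  · have hl : lam ω = 0 := by simp [hlamdef, Set.indicator_apply, h]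
    rw [hl, max_eq_right (le_of_not_ge h)]; ring

private lemma aux_sm_max {Ω : Type*} {m : MeasurableSpace Ω} {f g : Ω → ℝ}
    (hf : StronglyMeasurable[m] f) (hg : StronglyMeasurable[m] g) :
    StronglyMeasurable[m] (fun ω => max (f ω) (g ω)) := hf.sup hg

private lemma aux_sm_min {Ω : Type*} {m : MeasurableSpace Ω} {f g : Ω → ℝ}
    (hf : StronglyMeasurable[m] f) (hg : StronglyMeasurable[m] g) :
    StronglyMeasurable[m] (fun ω => min (f ω) (g ω)) := hf.inf hg

private lemma aux_sm_const {Ω : Type*} {m : MeasurableSpace Ω} (c : ℝ) :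
    StronglyMeasurable[m] (fun _ : Ω => c) := stronglyMeasurable_const

end Aux

/-- for a 𝓖-convex set 𝓠 of probability measures ν ≪ ℙ with ν|_𝓖 = ℙ|_𝓖
(identified with their densities), sup_{μ∈𝓠} 𝔼^μ[X] = 𝔼[esssup_{μ∈𝓠} 𝔼^μ[X|𝓖]] for all
X ∈ L^∞. -/
theorem stmt_15 {Ω : Type*} (m : MeasurableSpace Ω) {mΩ : MeasurableSpace Ω} (hm : m ≤ mΩ)
    (ℙ : Measure Ω) [IsProbabilityMeasure ℙ]
    (𝓠 : Set (Ω → ℝ)) (hne : 𝓠.Nonempty)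
    (h𝓠 : ∀ D ∈ 𝓠, Measurable D ∧ (∀ᵐ ω ∂ℙ, 0 ≤ D ω) ∧ Integrable D ℙ ∧
      (ℙ[D|m]) =ᵐ[ℙ] (fun _ => 1))
    (hGconv : ∀ D₁ ∈ 𝓠, ∀ D₂ ∈ 𝓠, ∀ lam : Ω → ℝ, StronglyMeasurable[m] lam →
      (∀ ω, 0 ≤ lam ω ∧ lam ω ≤ 1) →
      (fun ω => lam ω * D₁ ω + (1 - lam ω) * D₂ ω) ∈ 𝓠) :
    ∀ X : Ω → ℝ, Measurable X → (∃ C : ℝ, ∀ ω, |X ω| ≤ C) →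
      ∃ Y : Ω → ℝ, StronglyMeasurable[m] Y ∧ Integrable Y ℙ ∧
        (∀ D ∈ 𝓠, (ℙ[(fun ω => D ω * X ω)|m]) ≤ᵐ[ℙ] Y) ∧
        (∀ Z : Ω → ℝ, Measurable Z →
          (∀ D ∈ 𝓠, (ℙ[(fun ω => D ω * X ω)|m]) ≤ᵐ[ℙ] Z) → Y ≤ᵐ[ℙ] Z) ∧
        sSup ((fun D => ∫ ω, D ω * X ω ∂ℙ) '' 𝓠) = ∫ ω, Y ω ∂ℙ := by
  rintro X hX ⟨C, hC⟩
  haveI : IsFiniteMeasure (ℙ.trim hm) := isFiniteMeasure_trim hm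
  have hΩ : Nonempty Ω := by
    by_contra h
    rw [not_nonempty_iff] at h
    have h1 : (ℙ : Measure Ω) Set.univ = 1 := measure_univ
    rw [Set.univ_eq_empty_iff.mpr h] at h1
    simp at h1
  have hC0 : 0 ≤ C := le_trans (abs_nonneg _) (hC (Classical.arbitrary Ω))
  -- notation
  set f : (Ω → ℝ) → Ω → ℝ := fun D => ℙ[fun ω => D ω * X ω|m] with hfdef
  set I : (Ω → ℝ) → ℝ := fun D => ∫ ω, D ω * X ω ∂ℙ with hIdef
  set s : ℝ := sSup (I '' 𝓠) with hsdef
  -- basic facts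
  have hIeq : ∀ D ∈ 𝓠, ∫ ω, f D ω ∂ℙ = I D := by
    intro D hD
    exact integral_condExp hm
  have hbdd : ∀ D ∈ 𝓠, (∀ᵐ ω ∂ℙ, f D ω ≤ C) ∧ (∀ᵐ ω ∂ℙ, -C ≤ f D ω) := by
    intro D hD
    obtain ⟨h1, h2, h3, h4⟩ := h𝓠 D hD
    exact aux_bdd hm h1 h2 h3 h4 hX hC
  have hIle : ∀ D ∈ 𝓠, I D ≤ C := by
    intro D hD
    rw [← hIeq D hD]
    calc ∫ ω, f D ω ∂ℙ ≤ ∫ _, C ∂ℙ :=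
          integral_mono_ae integrable_condExp (integrable_const C) (hbdd D hD).1
      _ = C := by simp
  have hbddA : BddAbove (I '' 𝓠) := ⟨C, by rintro x ⟨D, hD, rfl⟩; exact hIle D hD⟩
  have hneI : (I '' 𝓠).Nonempty := hne.image I
  -- combining densities inside 𝓠
  have comb : ∀ D₁ ∈ 𝓠, ∀ D₂ ∈ 𝓠, ∃ D ∈ 𝓠,
      f D =ᵐ[ℙ] fun ω => max (f D₁ ω) (f D₂ ω) := by
    intro D₁ hD₁ D₂ hD₂
    obtain ⟨m1, p1, i1, c1⟩ := h𝓠 D₁ hD₁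
    obtain ⟨m2, p2, i2, c2⟩ := h𝓠 D₂ hD₂
    obtain ⟨lam, hlam, hlam01, heq⟩ := aux_comb hm hX hC m1 p1 i1 m2 p2 i2
    exact ⟨_, hGconv D₁ hD₁ D₂ hD₂ lam hlam hlam01, heq⟩
  -- a maximizing sequence
  have hseq : ∀ n : ℕ, ∃ D ∈ 𝓠, s - 1 / (n + 1) < I D := by
    intro n
    have hlt : s - 1 / (n + 1) < s := by
      have : (0 : ℝ) < 1 / (n + 1) := by positivity
      linarith
    obtain ⟨x, ⟨D, hD, rfl⟩, hx⟩ := exists_lt_of_lt_csSup hneI hlt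
    exact ⟨D, hD, hx⟩
  choose Dseq hDseqmem hDseqlt using hseq
  -- increasing chain
  choose g hgmem hgeq using comb
  let E : ℕ → {D // D ∈ 𝓠} := fun n => Nat.rec ⟨Dseq 0, hDseqmem 0⟩
    (fun k p => ⟨g p.1 p.2 (Dseq (k+1)) (hDseqmem (k+1)),
      hgmem p.1 p.2 (Dseq (k+1)) (hDseqmem (k+1))⟩) n
  have hE0 : (E 0).1 = Dseq 0 := rfl
  have hErec : ∀ n, f (E (n+1)).1 =ᵐ[ℙ]
      fun ω => max (f (E n).1 ω) (f (Dseq (n+1)) ω) :=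
    fun n => hgeq (E n).1 (E n).2 (Dseq (n+1)) (hDseqmem (n+1))
  have hEmono : ∀ n, f (E n).1 ≤ᵐ[ℙ] f (E (n+1)).1 := by
    intro n
    filter_upwards [hErec n] with ω e
    rw [e]; exact le_max_left _ _
  have hEgeD : ∀ n, f (Dseq n) ≤ᵐ[ℙ] f (E n).1 := by
    intro n
    cases n with
    | zero => rw [hE0]
    | succ k =>
      filter_upwards [hErec k] with ω e
      rw [e]; exact le_max_right _ _
  -- truncation and running maxima
  let gg : ℕ → Ω → ℝ := fun n ω => max (-C) (min (f (E n).1 ω) C)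
  have hggsm : ∀ n, StronglyMeasurable[m] (gg n) := fun n =>
    aux_sm_max (aux_sm_const _) (aux_sm_min stronglyMeasurable_condExp (aux_sm_const _))
  have hggbd : ∀ n ω, -C ≤ gg n ω ∧ gg n ω ≤ C := by
    intro n ω
    refine ⟨le_max_left _ _, max_le (by linarith) (min_le_right _ _)⟩
  have hggeq : ∀ n, gg n =ᵐ[ℙ] f (E n).1 := by
    intro n
    filter_upwards [(hbdd _ (E n).2).1, (hbdd _ (E n).2).2] with ω h1 h2
    simp only [gg, min_eq_left h1, max_eq_right h2]
  let h : ℕ → Ω → ℝ := fun n => Nat.rec (gg 0) (fun k ih ω => max (ih ω) (gg (k+1) ω)) n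
  have hh0 : h 0 = gg 0 := rfl
  have hhsucc : ∀ n, h (n+1) = fun ω => max (h n ω) (gg (n+1) ω) := fun n => rfl
  have hhsm : ∀ n, StronglyMeasurable[m] (h n) := by
    intro n
    induction n with
    | zero => exact hggsm 0
    | succ k ih => exact aux_sm_max ih (hggsm (k+1))
  have hhbd : ∀ n ω, -C ≤ h n ω ∧ h n ω ≤ C := by
    intro n
    induction n with
    | zero => exact fun ω => hggbd 0 ω
    | succ k ih =>
      intro ω
      exact ⟨le_trans (ih ω).1 (le_max_left _ _), max_le (ih ω).2 (hggbd (k+1) ω).2⟩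
  have hhmono : ∀ ω, Monotone fun n => h n ω := by
    intro ω
    apply monotone_nat_of_le_succ
    intro n
    rw [hhsucc n]
    exact le_max_left _ _
  have hheq : ∀ n, h n =ᵐ[ℙ] f (E n).1 := by
    intro n
    induction n with
    | zero => exact hggeq 0
    | succ k ih =>
      rw [hhsucc k]
      filter_upwards [ih, hggeq (k+1), hEmono k] with ω e1 e2 e3
      rw [e1, e2, max_eq_right e3]
  -- the essential supremum
  set Y : Ω → ℝ := fun ω => ⨆ n, h n ω with hYdef
  have hYbddA : ∀ ω, BddAbove (Set.range fun n => h n ω) := by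
    intro ω
    exact ⟨C, by rintro x ⟨n, rfl⟩; exact (hhbd n ω).2⟩
  have htend : ∀ ω, Tendsto (fun n => h n ω) atTop (nhds (Y ω)) := fun ω =>
    tendsto_atTop_ciSup (hhmono ω) (hYbddA ω)
  have hYsm : StronglyMeasurable[m] Y :=
    stronglyMeasurable_of_tendsto atTop hhsm (tendsto_pi_nhds.mpr htend)
  have hYbd : ∀ ω, -C ≤ Y ω ∧ Y ω ≤ C := by
    intro ω
    constructor
    · exact le_trans (hhbd 0 ω).1 (le_ciSup (hYbddA ω) 0)
    · exact ciSup_le fun n => (hhbd n ω).2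
  have hYi : Integrable Y ℙ := by
    refine (integrable_const C).mono' ((hYsm.mono hm).aestronglyMeasurable) ?_
    refine Eventually.of_forall fun ω => ?_
    rw [Real.norm_eq_abs, abs_le]
    exact hYbd ω
  -- integral of h n
  have hInth : ∀ n, ∫ ω, h n ω ∂ℙ = I (E n).1 := by
    intro n
    rw [integral_congr_ae (hheq n)]
    exact hIeq _ (E n).2
  have hInthInt : ∀ n, Integrable (h n) ℙ := by
    intro n
    refine (integrable_const C).mono' (((hhsm n).mono hm).aestronglyMeasurable) ?_
    refine Eventually.of_forall fun ω => ?_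
    rw [Real.norm_eq_abs, abs_le]
    exact hhbd n ω
  -- ∫ h n → ∫ Y
  have htendInt : Tendsto (fun n => ∫ ω, h n ω ∂ℙ) atTop (nhds (∫ ω, Y ω ∂ℙ)) := by
    refine tendsto_integral_of_dominated_convergence (fun _ => C)
      (fun n => ((hhsm n).mono hm).aestronglyMeasurable) (integrable_const C) ?_ ?_
    · intro n
      refine Eventually.of_forall fun ω => ?_
      rw [Real.norm_eq_abs, abs_le]
      exact hhbd n ω
    · exact Eventually.of_forall htend
  -- ∫ h n → s via squeeze
  have hIEn_le : ∀ n, I (E n).1 ≤ s := fun n =>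
    le_csSup hbddA ⟨(E n).1, (E n).2, rfl⟩
  have hIEn_ge : ∀ n, s - 1 / (n + 1) ≤ I (E n).1 := by
    intro n
    refine le_trans (le_of_lt (hDseqlt n)) ?_
    rw [← hIeq _ (hDseqmem n), ← hIeq _ (E n).2]
    exact integral_mono_ae integrable_condExp integrable_condExp (hEgeD n)
  have htends : Tendsto (fun n : ℕ => I (E n).1) atTop (nhds s) := by
    have hlow : Tendsto (fun n : ℕ => s - 1 / (n + 1 : ℝ)) atTop (nhds s) := by
      have := tendsto_one_div_add_atTop_nhds_zero_nat (𝕜 := ℝ)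
      have h2 := (tendsto_const_nhds (x := s) (f := atTop (α := ℕ))).sub this
      simpa using h2
    exact tendsto_of_tendsto_of_tendsto_of_le_of_le hlow tendsto_const_nhds hIEn_ge hIEn_le
  have hYint_eq : ∫ ω, Y ω ∂ℙ = s := by
    refine tendsto_nhds_unique ?_ htends
    convert htendInt using 2 with n
    · exact (hInth n).symm
  -- upper bound property
  have hub : ∀ D ∈ 𝓠, f D ≤ᵐ[ℙ] Y := by
    intro D hD
    -- truncation of f D
    set ψ : Ω → ℝ := fun ω => max (-C) (min (f D ω) C) with hψdef
    have hψeq : ψ =ᵐ[ℙ] f D := by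
      filter_upwards [(hbdd D hD).1, (hbdd D hD).2] with ω h1 h2
      simp only [hψdef, min_eq_left h1, max_eq_right h2]
    have hψsm : StronglyMeasurable[m] ψ :=
      aux_sm_max (aux_sm_const _) (aux_sm_min stronglyMeasurable_condExp (aux_sm_const _))
    have hψbd : ∀ ω, -C ≤ ψ ω ∧ ψ ω ≤ C := fun ω =>
      ⟨le_max_left _ _, max_le (by linarith) (min_le_right _ _)⟩
    -- the combined sequence
    have hFn : ∀ n, ∃ F ∈ 𝓠, f F =ᵐ[ℙ] fun ω => max (f (E n).1 ω) (f D ω) :=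
      fun n => ⟨g (E n).1 (E n).2 D hD, hgmem (E n).1 (E n).2 D hD, hgeq (E n).1 (E n).2 D hD⟩
    have hIntmax : ∀ n, ∫ ω, max (h n ω) (ψ ω) ∂ℙ ≤ s := by
      intro n
      obtain ⟨F, hF, hFeq⟩ := hFn n
      have : ∫ ω, max (h n ω) (ψ ω) ∂ℙ = I F := by
        rw [← hIeq F hF]
        refine integral_congr_ae ?_
        filter_upwards [hFeq, hheq n, hψeq] with ω e1 e2 e3
        rw [e1, e2, e3]
      rw [this]
      exact le_csSup hbddA ⟨F, hF, rfl⟩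
    set M : Ω → ℝ := fun ω => max (Y ω) (ψ ω) with hMdef
    have hMtend : ∀ ω, Tendsto (fun n => max (h n ω) (ψ ω)) atTop (nhds (M ω)) :=
      fun ω => (htend ω).max tendsto_const_nhds
    have hMint : Tendsto (fun n => ∫ ω, max (h n ω) (ψ ω) ∂ℙ) atTop (nhds (∫ ω, M ω ∂ℙ)) := by
      refine tendsto_integral_of_dominated_convergence (fun _ => C)
        (fun n => ((aux_sm_max (hhsm n) hψsm).mono hm).aestronglyMeasurable) (integrable_const C) ?_ ?_
      · intro n
        refine Eventually.of_forall fun ω => ?_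
        rw [Real.norm_eq_abs, abs_le]
        exact ⟨le_trans (hhbd n ω).1 (le_max_left _ _),
          max_le (hhbd n ω).2 (hψbd ω).2⟩
      · exact Eventually.of_forall hMtend
    have hMle : ∫ ω, M ω ∂ℙ ≤ s := le_of_tendsto hMint (Eventually.of_forall hIntmax)
    have hMi : Integrable M ℙ := by
      refine (integrable_const C).mono' (((aux_sm_max hYsm hψsm).mono hm).aestronglyMeasurable) ?_
      refine Eventually.of_forall fun ω => ?_
      rw [Real.norm_eq_abs, abs_le]
      exact ⟨le_trans (hYbd ω).1 (le_max_left _ _), max_le (hYbd ω).2 (hψbd ω).2⟩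
    have hMY : ∀ ω, Y ω ≤ M ω := fun ω => le_max_left _ _
    have hsub0 : (fun ω => M ω - Y ω) =ᵐ[ℙ] 0 := by
      rw [← integral_eq_zero_iff_of_nonneg_ae
        (Eventually.of_forall fun ω => sub_nonneg.mpr (hMY ω)) (hMi.sub hYi)]
      have h1 : ∫ ω, (M ω - Y ω) ∂ℙ = (∫ ω, M ω ∂ℙ) - ∫ ω, Y ω ∂ℙ :=
        integral_sub hMi hYi
      rw [h1, hYint_eq]
      have h2 : 0 ≤ ∫ ω, (M ω - Y ω) ∂ℙ :=
        integral_nonneg fun ω => sub_nonneg.mpr (hMY ω)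
      rw [h1, hYint_eq] at h2
      linarith
    filter_upwards [hsub0, hψeq] with ω e1 e2
    have : M ω = Y ω := by
      have := sub_eq_zero.mp e1
      exact this
    rw [← e2]
    calc ψ ω ≤ M ω := le_max_right _ _
      _ = Y ω := this
  -- minimality
  have hmin : ∀ Z : Ω → ℝ, Measurable Z →
      (∀ D ∈ 𝓠, f D ≤ᵐ[ℙ] Z) → Y ≤ᵐ[ℙ] Z := by
    intro Z hZ hZub
    have hall : ∀ᵐ ω ∂ℙ, ∀ n, h n ω ≤ Z ω := by
      rw [ae_all_iff]
      intro n
      filter_upwards [hheq n, hZub (E n).1 (E n).2] with ω e1 e2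
      rw [e1]; exact e2
    filter_upwards [hall] with ω e
    exact ciSup_le e
  exact ⟨Y, hYsm, hYi, hub, hmin, hYint_eq.symm⟩
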